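/- Let U be uniform on (0,1), γ ∈ (0,1), C^γ = {U ≤ γ}, P^γ(A) = P(A)/γ for A ⊆ C^γ measurable. Let X satisfy properties (iii)-(iv) above, Z = X restricted to C^γ, and f nondecreasing and left-continuous. Then for all α ∈ (0,1), VaR^α_{P^γ}(f(Z)) = VaR^{αγ}_P(f(X)), and moreover lim_{α↑1} VaR^α_{P^γ}(f(Z)) = q(γ) where q(γ) = f(F⁻¹_{μ₁}(γ),…,F⁻¹_{μₙ}(γ)). -/

import Mathlib

open MeasureTheory

/-- Left-continuous quantile function `F⁻¹_μ(u) = inf {a : F_μ(a) ≥ u}`. -/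
noncomputable def qf (μ : Measure ℝ) (u : ℝ) : ℝ :=
  sInf {a : ℝ | u ≤ (μ (Set.Iic a)).toReal}

/-- Value at risk at level `α`: `VaR^α(Z) = inf {a : Q(Z > a) ≤ 1 − α}`. -/
noncomputable def VaR {Ω : Type*} [MeasurableSpace Ω] (Q : Measure Ω)
    (Z : Ω → ℝ) (α : ℝ) : ℝ :=
  sInf {a : ℝ | (Q {ω | a < Z ω}).toReal ≤ 1 - α}

section helpers

variable {μ : Measure ℝ} [IsProbabilityMeasure μ]

lemma qf_set_eq (u : ℝ) :
    {a : ℝ | u ≤ (μ (Set.Iic a)).toReal} = {a : ℝ | u ≤ ProbabilityTheory.cdf μ a} := by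
  simp [ProbabilityTheory.cdf_eq_real, measureReal_def]

lemma qf_bddBelow {u : ℝ} (hu : 0 < u) :
    BddBelow {a : ℝ | u ≤ (μ (Set.Iic a)).toReal} := by
  rw [qf_set_eq]
  obtain ⟨b, hb⟩ := ((ProbabilityTheory.tendsto_cdf_atBot μ).eventually_lt_const hu).exists
  refine ⟨b, fun a ha => ?_⟩
  by_contra h
  push_neg at h
  have h2 := (ProbabilityTheory.monotone_cdf μ) h.le
  have h3 : u ≤ ProbabilityTheory.cdf μ a := ha
  linarith

lemma qf_nonempty {u : ℝ} (hu : u < 1) :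
    Set.Nonempty {a : ℝ | u ≤ (μ (Set.Iic a)).toReal} := by
  rw [qf_set_eq]
  obtain ⟨b, hb⟩ := ((ProbabilityTheory.tendsto_cdf_atTop μ).eventually_const_lt hu).exists
  exact ⟨b, hb.le⟩

lemma qf_mono_u {u u' : ℝ} (hu : 0 < u) (huu : u ≤ u') (hu' : u' < 1) :
    qf μ u ≤ qf μ u' :=
  csInf_le_csInf (qf_bddBelow hu) (qf_nonempty hu') fun _ ha => le_trans huu ha

lemma cdf_lt_of_lt_qf {u c : ℝ} (hu : 0 < u) (hc : c < qf μ u) :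
    (μ (Set.Iic c)).toReal < u := by
  by_contra h
  push_neg at h
  exact absurd (csInf_le (qf_bddBelow hu) (h : u ≤ (μ (Set.Iic c)).toReal)) (not_le.mpr hc)

end helpers

/-- For the conditional measure `P^γ = γ⁻¹ P(· ∩ {U ≤ γ})`:
`VaR^α_{P^γ}(f(Z)) = VaR^{αγ}_P(f(X))` for all `α ∈ (0,1)`, and
`lim_{α↑1} VaR^α_{P^γ}(f(Z)) = q(γ)`. -/

theorem VaR_conditional {Ω : Type*} [MeasurableSpace Ω] (P : Measure Ω)
    [IsProbabilityMeasure P]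
    (n : ℕ) (U : Ω → ℝ) (hU : Measurable U)
    (hUunif : P.map U = volume.restrict (Set.Ioo (0 : ℝ) 1))
    (γ : ℝ) (hγ : γ ∈ Set.Ioo (0 : ℝ) 1)
    (μ : Fin n → ProbabilityMeasure ℝ) (X : Fin n → Ω → ℝ)
    (hXm : ∀ i, Measurable (X i))
    (hXd : ∀ i, P.map (X i) = (μ i).toMeasure)
    (hindep : ProbabilityTheory.iIndepFun X
      ((ENNReal.ofReal γ)⁻¹ • P.restrict {ω | U ω ≤ γ}))
    (h0 : ∀ i, P ({ω | qf (μ i).toMeasure γ < X i ω} ∩ {ω | U ω ≤ γ}) = 0)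
    (hagree : ∀ i ω, γ < U ω → X i ω = qf (μ i).toMeasure (U ω))
    (f : (Fin n → ℝ) → ℝ) (hf : Monotone f)
    (hlc : ∀ x : Fin n → ℝ,
      Filter.Tendsto f (nhdsWithin x {y | ∀ i, y i < x i}) (nhds (f x))) :
    (∀ α ∈ Set.Ioo (0 : ℝ) 1,
      VaR ((ENNReal.ofReal γ)⁻¹ • P.restrict {ω | U ω ≤ γ})
          (fun ω => f (fun i => X i ω)) α
        = VaR P (fun ω => f (fun i => X i ω)) (α * γ)) ∧
    Filter.Tendsto
      (fun α => VaR ((ENNReal.ofReal γ)⁻¹ • P.restrict {ω | U ω ≤ γ})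
        (fun ω => f (fun i => X i ω)) α)
      (nhdsWithin 1 (Set.Iio 1))
      (nhds (f (fun i => qf (μ i).toMeasure γ))) := by
  obtain ⟨hγ0, hγ1⟩ := hγ
  set B : Set Ω := {ω | U ω ≤ γ} with hBdef
  set Q : Measure Ω := (ENNReal.ofReal γ)⁻¹ • P.restrict B with hQdef
  set g : Ω → ℝ := fun ω => f (fun i => X i ω) with hgdef
  set q : ℝ := f (fun i => qf (μ i).toMeasure γ) with hqdef
  have hBm : MeasurableSet B := hU measurableSet_Iic
  have hPB : P B = ENNReal.ofReal γ := by
    have hB' : B = U ⁻¹' Set.Iic γ := rfl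
    rw [hB', ← Measure.map_apply hU measurableSet_Iic, hUunif,
      Measure.restrict_apply measurableSet_Iic]
    have : Set.Iic γ ∩ Set.Ioo 0 1 = Set.Ioc 0 γ := by
      ext x
      constructor
      · rintro ⟨h1, h2, h3⟩; exact ⟨h2, h1⟩
      · rintro ⟨h1, h2⟩; exact ⟨h2, h1, lt_of_le_of_lt h2 hγ1⟩
    rw [this, Real.volume_Ioc]
    norm_num
  have hPBc : P {ω | γ < U ω} = ENNReal.ofReal (1 - γ) := by
    have hB' : {ω | γ < U ω} = U ⁻¹' Set.Ioi γ := rfl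
    rw [hB', ← Measure.map_apply hU measurableSet_Ioi, hUunif,
      Measure.restrict_apply measurableSet_Ioi]
    have : Set.Ioi γ ∩ Set.Ioo 0 1 = Set.Ioo γ 1 := by
      ext x
      constructor
      · rintro ⟨h1, h2, h3⟩; exact ⟨h1, h3⟩
      · rintro ⟨h1, h2⟩; exact ⟨h1, hγ0.trans h1, h2⟩
    rw [this, Real.volume_Ioo]
  have hN : P {ω | U ω ∉ Set.Ioo 0 1} = 0 := by
    have hN' : {ω | U ω ∉ Set.Ioo 0 1} = U ⁻¹' (Set.Ioo 0 1)ᶜ := rfl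
    rw [hN', ← Measure.map_apply hU measurableSet_Ioo.compl, hUunif,
      Measure.restrict_apply measurableSet_Ioo.compl, Set.compl_inter_self, measure_empty]
  have hγne : ENNReal.ofReal γ ≠ 0 := (ENNReal.ofReal_pos.mpr hγ0).ne'
  have hγnet : ENNReal.ofReal γ ≠ ⊤ := ENNReal.ofReal_ne_top
  have hQapp : ∀ A : Set Ω, Q A = (ENNReal.ofReal γ)⁻¹ * P (A ∩ B) := by
    intro A
    rw [hQdef, Measure.smul_apply, smul_eq_mul, Measure.restrict_apply' hBm]
  have hQuniv : Q Set.univ = 1 := by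
    rw [hQapp, Set.univ_inter, hPB, ENNReal.inv_mul_cancel hγne hγnet]
  have hQfin : ∀ A : Set Ω, Q A ≠ ⊤ := fun A =>
    ((measure_mono (Set.subset_univ A)).trans_lt (by rw [hQuniv]; exact ENNReal.one_lt_top)).ne
  -- for a ≥ q, the event {a < g} ∩ B is P-null
  have hnull : ∀ a : ℝ, q ≤ a → P ({ω | a < g ω} ∩ B) = 0 := by
    intro a ha
    have hsub : {ω | a < g ω} ∩ B ⊆ ⋃ i, ({ω | qf (μ i).toMeasure γ < X i ω} ∩ B) := by
      rintro ω ⟨hω, hωB⟩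
      by_contra h
      simp only [Set.mem_iUnion, Set.mem_inter_iff, Set.mem_setOf_eq, not_exists, not_and] at h
      have hle : ∀ i, X i ω ≤ qf (μ i).toMeasure γ := by
        intro i
        by_contra h2
        push_neg at h2
        exact h i h2 hωB
      have hgle : g ω ≤ q := hf hle
      exact absurd (hω : a < g ω) (not_lt.mpr (hgle.trans ha))
    exact measure_mono_null hsub (measure_iUnion_null fun i => h0 i)
  -- for a < q, {a < g} contains {γ < U} up to a null set
  have hlow : ∀ a : ℝ, a < q →
      P ({ω | a < g ω} ∩ {ω | γ < U ω}) = P {ω | γ < U ω} := by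
    intro a ha
    refine le_antisymm (measure_mono Set.inter_subset_right) ?_
    have hsub : {ω | γ < U ω} ⊆
        ({ω | a < g ω} ∩ {ω | γ < U ω}) ∪ {ω | U ω ∉ Set.Ioo 0 1} := by
      intro ω hω
      by_cases hNω : U ω ∈ Set.Ioo 0 1
      · left
        refine ⟨?_, hω⟩
        have hge : ∀ i, qf (μ i).toMeasure γ ≤ X i ω := by
          intro i
          rw [hagree i ω hω]
          exact qf_mono_u hγ0 (le_of_lt hω) hNω.2
        have : q ≤ g ω := hf hge
        exact lt_of_lt_of_le ha this
      · right; exact hNω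
    calc P {ω | γ < U ω}
        ≤ P (({ω | a < g ω} ∩ {ω | γ < U ω}) ∪ {ω | U ω ∉ Set.Ioo 0 1}) := measure_mono hsub
      _ ≤ P ({ω | a < g ω} ∩ {ω | γ < U ω}) + P {ω | U ω ∉ Set.Ioo 0 1} := measure_union_le _ _
      _ = P ({ω | a < g ω} ∩ {ω | γ < U ω}) := by rw [hN, add_zero]
  have hPA : ∀ a : ℝ,
      P {ω | a < g ω} = P ({ω | a < g ω} ∩ B) + P ({ω | a < g ω} ∩ {ω | γ < U ω}) := by
    intro a
    have hdiff : {ω | a < g ω} \ B = {ω | a < g ω} ∩ {ω | γ < U ω} := by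
      ext ω
      simp only [Set.mem_diff, Set.mem_inter_iff, Set.mem_setOf_eq, hBdef, not_le]
    rw [← measure_inter_add_diff {ω | a < g ω} hBm, hdiff]
  -- the key set identity
  have key : ∀ α ∈ Set.Ioo (0:ℝ) 1,
      {a : ℝ | (Q {ω | a < g ω}).toReal ≤ 1 - α}
        = {a : ℝ | (P {ω | a < g ω}).toReal ≤ 1 - α * γ} := by
    rintro α ⟨hα0, hα1⟩
    ext a
    simp only [Set.mem_setOf_eq]
    rcases lt_or_ge a q with ha | ha
    · have h1 : (Q {ω | a < g ω}).toReal = γ⁻¹ * (P ({ω | a < g ω} ∩ B)).toReal := by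
        rw [hQapp, ENNReal.toReal_mul, ENNReal.toReal_inv, ENNReal.toReal_ofReal hγ0.le]
      have h2 : (P {ω | a < g ω}).toReal = (P ({ω | a < g ω} ∩ B)).toReal + (1 - γ) := by
        rw [hPA a, hlow a ha, hPBc,
          ENNReal.toReal_add (measure_ne_top _ _) ENNReal.ofReal_ne_top,
          ENNReal.toReal_ofReal (by linarith)]
      rw [h1, h2, inv_mul_le_iff₀ hγ0]
      constructor <;> intro h <;> nlinarith
    · have h1 : Q {ω | a < g ω} = 0 := by rw [hQapp, hnull a ha, mul_zero]
      have h2 : (P {ω | a < g ω}).toReal ≤ 1 - γ := by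
        rw [hPA a, hnull a ha, zero_add]
        calc (P ({ω | a < g ω} ∩ {ω | γ < U ω})).toReal
            ≤ (P {ω | γ < U ω}).toReal :=
              ENNReal.toReal_mono (measure_ne_top _ _) (measure_mono Set.inter_subset_right)
          _ = 1 - γ := by rw [hPBc, ENNReal.toReal_ofReal (by linarith)]
      constructor
      · intro _
        nlinarith
      · intro _
        rw [h1]
        simp only [ENNReal.toReal_zero]
        linarith
  constructor
  · intro α hα
    simp only [VaR]
    exact congrArg sInf (key α hα)
  · -- the limit statement
    have hqmem : ∀ α : ℝ, α ≤ 1 → (Q {ω | q < g ω}).toReal ≤ 1 - α := by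
      intro α hα
      have h1 : Q {ω | q < g ω} = 0 := by rw [hQapp, hnull q le_rfl, mul_zero]
      rw [h1]
      simp only [ENNReal.toReal_zero]
      linarith
    have hpos : ∀ a : ℝ, a < q → 0 < (Q {ω | a < g ω}).toReal := by
      intro a ha
      have hfx : f (fun i => qf (μ i).toMeasure γ) = q := rfl
      set x : Fin n → ℝ := fun i => qf (μ i).toMeasure γ with hxdef
      have hxcl : x ∈ closure {y : Fin n → ℝ | ∀ i, y i < x i} := by
        have htend : Filter.Tendsto (fun k : ℕ => fun i => x i - ((k : ℝ) + 1)⁻¹)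
            Filter.atTop (nhds x) := by
          rw [tendsto_pi_nhds]
          intro i
          have h0' : Filter.Tendsto (fun k : ℕ => ((k : ℝ) + 1)⁻¹) Filter.atTop (nhds 0) := by
            simpa [one_div] using tendsto_one_div_add_atTop_nhds_zero_nat (𝕜 := ℝ)
          simpa using tendsto_const_nhds.sub h0'
        refine mem_closure_of_tendsto htend (Filter.Eventually.of_forall fun k => ?_)
        intro i
        simp only [Set.mem_setOf_eq]
        have : (0 : ℝ) < ((k : ℝ) + 1)⁻¹ := by positivity
        linarith
      have hne : (nhdsWithin x {y | ∀ i, y i < x i}).NeBot :=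
        mem_closure_iff_nhdsWithin_neBot.mp hxcl
      have hev : ∀ᶠ y in nhdsWithin x {y | ∀ i, y i < x i}, a < f y :=
        (hlc x).eventually (eventually_gt_nhds (hfx ▸ ha))
      obtain ⟨y, hya, hy⟩ := (hev.and self_mem_nhdsWithin).exists
      have hsub : (⋂ i, X i ⁻¹' Set.Ici (y i)) ⊆ {ω | a < g ω} := by
        intro ω hω
        simp only [Set.mem_iInter, Set.mem_preimage, Set.mem_Ici] at hω
        exact lt_of_lt_of_le hya (hf fun i => hω i)
      have hprod : Q (⋂ i, X i ⁻¹' Set.Ici (y i)) = ∏ i, Q (X i ⁻¹' Set.Ici (y i)) :=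
        hindep.meas_iInter fun i => ⟨Set.Ici (y i), measurableSet_Ici, rfl⟩
      have hfac : ∀ i, Q (X i ⁻¹' Set.Ici (y i)) ≠ 0 := by
        intro i
        rw [hQapp]
        refine mul_ne_zero (ENNReal.inv_ne_zero.mpr hγnet) ?_
        intro hzero
        have hcover : X i ⁻¹' Set.Ici (y i) ⊆
            (X i ⁻¹' Set.Ici (y i) ∩ B) ∪ {ω | γ < U ω} := by
          intro ω hω
          by_cases hB' : U ω ≤ γ
          · left; exact ⟨hω, hB'⟩
          · right; exact lt_of_not_ge hB'
        have hle : P (X i ⁻¹' Set.Ici (y i)) ≤ ENNReal.ofReal (1 - γ) := by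
          calc P (X i ⁻¹' Set.Ici (y i))
              ≤ P ((X i ⁻¹' Set.Ici (y i) ∩ B) ∪ {ω | γ < U ω}) := measure_mono hcover
            _ ≤ P (X i ⁻¹' Set.Ici (y i) ∩ B) + P {ω | γ < U ω} := measure_union_le _ _
            _ = ENNReal.ofReal (1 - γ) := by rw [hzero, zero_add, hPBc]
        have hmap : P (X i ⁻¹' Set.Ici (y i)) = (μ i).toMeasure (Set.Ici (y i)) := by
          rw [← hXd i, Measure.map_apply (hXm i) measurableSet_Ici]
        have hcdf : ((μ i).toMeasure (Set.Iic (y i))).toReal < γ :=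
          cdf_lt_of_lt_qf hγ0 (hy i)
        have hIio : ((μ i).toMeasure (Set.Iio (y i))).toReal
            ≤ ((μ i).toMeasure (Set.Iic (y i))).toReal :=
          ENNReal.toReal_mono (measure_ne_top _ _) (measure_mono Set.Iio_subset_Iic_self)
        have hcompl : (μ i).toMeasure (Set.Iio (y i)) + (μ i).toMeasure (Set.Ici (y i)) = 1 := by
          have h' := measure_add_measure_compl (μ := (μ i).toMeasure)
            (measurableSet_Iio (a := y i))
          rw [Set.compl_Iio, measure_univ] at h'
          exact h' 
        have hIci : ((μ i).toMeasure (Set.Ici (y i))).toReal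
            = 1 - ((μ i).toMeasure (Set.Iio (y i))).toReal := by
          have h' := congrArg ENNReal.toReal hcompl
          rw [ENNReal.toReal_add (measure_ne_top _ _) (measure_ne_top _ _),
            ENNReal.toReal_one] at h'
          linarith
        have hle' : (P (X i ⁻¹' Set.Ici (y i))).toReal ≤ 1 - γ := by
          calc (P (X i ⁻¹' Set.Ici (y i))).toReal
              ≤ (ENNReal.ofReal (1 - γ)).toReal :=
                ENNReal.toReal_mono ENNReal.ofReal_ne_top hle
            _ = 1 - γ := ENNReal.toReal_ofReal (by linarith)
        rw [hmap, hIci] at hle'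
        linarith
      have h1 : Q (⋂ i, X i ⁻¹' Set.Ici (y i)) ≠ 0 := by
        rw [hprod]
        exact Finset.prod_ne_zero_iff.mpr fun i _ => hfac i
      have h2 : Q (⋂ i, X i ⁻¹' Set.Ici (y i)) ≤ Q {ω | a < g ω} := measure_mono hsub
      refine ENNReal.toReal_pos (fun h => h1 (le_antisymm (h ▸ h2) zero_le)) (hQfin _)
    rw [Metric.tendsto_nhds]
    intro ε hε
    have ha : q - ε / 2 < q := by linarith
    have hδ := hpos (q - ε / 2) ha
    set δ := (Q {ω | q - ε / 2 < g ω}).toReal with hδdef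
    have hmem : Set.Ioo (max (1 - δ) 0) 1 ∈ nhdsWithin 1 (Set.Iio 1) :=
      Ioo_mem_nhdsLT_of_mem ⟨max_lt (by linarith) one_pos, le_rfl⟩
    filter_upwards [hmem] with α hα
    obtain ⟨hα1, hα2⟩ := hα
    have hα3 : 1 - α < δ := by
      have := lt_of_le_of_lt (le_max_left (1 - δ) 0) hα1
      linarith
    simp only [VaR]
    have hlb : ∀ b ∈ {a : ℝ | (Q {ω | a < g ω}).toReal ≤ 1 - α}, q - ε / 2 ≤ b := by
      intro b hb
      by_contra h
      push_neg at h
      have hsubset : {ω | q - ε / 2 < g ω} ⊆ {ω | b < g ω} := fun ω hω => lt_trans h hω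
      have hmono := ENNReal.toReal_mono (hQfin _) (measure_mono hsubset)
      have hb' : (Q {ω | b < g ω}).toReal ≤ 1 - α := hb
      linarith
    have hV1 : q - ε / 2 ≤ sInf {a : ℝ | (Q {ω | a < g ω}).toReal ≤ 1 - α} :=
      le_csInf ⟨q, hqmem α hα2.le⟩ hlb
    have hV2 : sInf {a : ℝ | (Q {ω | a < g ω}).toReal ≤ 1 - α} ≤ q :=
      csInf_le ⟨q - ε / 2, hlb⟩ (hqmem α hα2.le)
    rw [Real.dist_eq, abs_lt]
    constructor <;> linarith
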